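/- arXiv:0708.1568 — 4 statements merged into one kernel-verified Lean document; each statement's English description precedes it below -/
import Mathlib

section
/- Let v: ℝ → ℝ be C² and define u(S,t) = S·v(log S + a·t) for a ≠ 0 and S > 0. If v satisfies v_z + q·(v_zz + v_z)/(1 - b·(v_zz + v_z))² = 0 with q = σ²/(2a), then u satisfies u_t + (σ²/2)·S²·u_SS/(1 - b·S·u_SS)² = 0. -/
/-- Reduction of the nonlinear Black–Scholes PDE (case `k = 0`) to an ODE via the
invariant variables `z = log S + a t`, `v = u / S`: if `v` solves the reduced ODE,
then `u(t,S) = S v(log S + a t)` solves the PDE. -/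
theorem stmt4 (σ a b q : ℝ) (hσ : 0 < σ) (ha : a ≠ 0) (hb : b ≠ 0)
    (hq : q = σ ^ 2 / (2 * a))
    (v : ℝ → ℝ) (hv : ContDiff ℝ 2 v)
    (hode : ∀ z : ℝ,
      deriv v z + q * (deriv (deriv v) z + deriv v z)
        / (1 - b * (deriv (deriv v) z + deriv v z)) ^ 2 = 0) :
    ∀ t S : ℝ, 0 < S →
      deriv (fun τ => S * v (Real.log S + a * τ)) t
        + σ ^ 2 / 2 * S ^ 2 * deriv (deriv (fun s => s * v (Real.log s + a * t))) S
          / (1 - b * S * deriv (deriv (fun s => s * v (Real.log s + a * t))) S) ^ 2 = 0 := by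
  intro t S hS
  have hS0 : S ≠ 0 := ne_of_gt hS
  have hv1 : Differentiable ℝ v := hv.differentiable two_ne_zero
  have hv2 : ContDiff ℝ 1 (deriv v) :=
    (contDiff_succ_iff_deriv.mp (show ContDiff ℝ (1 + 1) v by exact_mod_cast hv)).2.2
  have hw1 : Differentiable ℝ (deriv v) := hv2.differentiable one_ne_zero
  set z := Real.log S + a * t with hz
  -- time derivative
  have ht : deriv (fun τ => S * v (Real.log S + a * τ)) t = S * (deriv v z * a) := by
    have h1 : HasDerivAt (fun τ : ℝ => Real.log S + a * τ) a t := by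
      simpa using ((hasDerivAt_id t).const_mul a).const_add (Real.log S)
    have h2 : HasDerivAt (fun τ => v (Real.log S + a * τ)) (deriv v z * a) t :=
      ((hv1 _).hasDerivAt).comp t h1
    exact (h2.const_mul S).deriv
  -- first spatial derivative, for all s > 0
  have hderiv1 : ∀ s : ℝ, 0 < s →
      HasDerivAt (fun s => s * v (Real.log s + a * t))
        (v (Real.log s + a * t) + deriv v (Real.log s + a * t)) s := by
    intro s hs
    have hg : HasDerivAt (fun s : ℝ => Real.log s + a * t) s⁻¹ s :=
      (Real.hasDerivAt_log hs.ne').add_const _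
    have hc : HasDerivAt (fun s => v (Real.log s + a * t))
        (deriv v (Real.log s + a * t) * s⁻¹) s := ((hv1 _).hasDerivAt).comp s hg
    have h := (hasDerivAt_id s).mul hc
    refine h.congr_deriv ?_
    simp only [id]
    field_simp [hs.ne']
  have heq : (fun s => deriv (fun s => s * v (Real.log s + a * t)) s)
      =ᶠ[nhds S] (fun s => v (Real.log s + a * t) + deriv v (Real.log s + a * t)) := by
    filter_upwards [eventually_gt_nhds hS] with s hs
    exact (hderiv1 s hs).deriv
  -- second spatial derivative
  have h2nd : deriv (deriv (fun s => s * v (Real.log s + a * t))) S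
      = (deriv (deriv v) z + deriv v z) * S⁻¹ := by
    rw [heq.deriv_eq]
    have hg : HasDerivAt (fun s : ℝ => Real.log s + a * t) S⁻¹ S :=
      (Real.hasDerivAt_log hS0).add_const _
    have h1 : HasDerivAt (fun s => v (Real.log s + a * t)) (deriv v z * S⁻¹) S :=
      ((hv1 _).hasDerivAt).comp S hg
    have h2 : HasDerivAt (fun s => deriv v (Real.log s + a * t))
        (deriv (deriv v) z * S⁻¹) S := ((hw1 _).hasDerivAt).comp S hg
    rw [(h1.fun_add h2).deriv]
    ring
  rw [ht, h2nd]
  set W := deriv (deriv v) z + deriv v z with hW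
  have e1 : b * S * (W * S⁻¹) = b * W := by field_simp
  have e2 : σ ^ 2 / 2 * S ^ 2 * (W * S⁻¹) = a * q * S * W := by
    rw [hq]; field_simp
  rw [e1, e2]
  have key := hode z
  linear_combination (S * a) * key
end

section
/- Define v(z) = -(1/b)·A(z)^{-2/3} - (1/b)·A(z)^{2/3} - (2/b)·log(A(z)^{-1/3} + A(z)^{1/3} - 2) + d, where A(z) = 1 + c·e^{-3z/2} + √(2c·e^{-3z/2} + c²·e^{-3z}), with constants c > 0, b ≠ 0, d ∈ ℝ. Then v'(z) = (1/b)·(1 + A(z)^{-2/3} + A(z)^{2/3}) for all z ∈ ℝ. -/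
set_option maxHeartbeats 2000000

noncomputable def Afun (c z : ℝ) : ℝ :=
  1 + c * Real.exp (-3 * z / 2)
    + Real.sqrt (2 * c * Real.exp (-3 * z / 2) + c ^ 2 * Real.exp (-3 * z))

/-- The explicit formula (solvzplus) is an antiderivative of the right-hand side
of the ODE (reshv) from the exactly integrable case `q = -4`. -/
theorem stmt15 (b c d : ℝ) (hb : b ≠ 0) (hc : 0 < c) :
    ∀ z : ℝ,
      deriv (fun z' =>
        -(1 / b) * (Afun c z') ^ (-(2 : ℝ) / 3)
          - (1 / b) * (Afun c z') ^ ((2 : ℝ) / 3)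
          - (2 / b) * Real.log ((Afun c z') ^ (-(1 : ℝ) / 3)
              + (Afun c z') ^ ((1 : ℝ) / 3) - 2)
          + d) z
      = (1 / b) * (1 + (Afun c z) ^ (-(2 : ℝ) / 3) + (Afun c z) ^ ((2 : ℝ) / 3)) := by
  intro z
  have hlin : HasDerivAt (fun z' : ℝ => -3 * z' / 2) (-3/2) z := by
    simpa using ((hasDerivAt_id z).const_mul (-3:ℝ)).div_const 2
  have hE1 : HasDerivAt (fun z' : ℝ => Real.exp (-3 * z' / 2))
      (Real.exp (-3 * z / 2) * (-3/2)) z := hlin.exp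
  have hlin2 : HasDerivAt (fun z' : ℝ => -3 * z') (-3 : ℝ) z := by
    simpa using (hasDerivAt_id z).const_mul (-3:ℝ)
  have hE2 : HasDerivAt (fun z' : ℝ => Real.exp (-3 * z'))
      (Real.exp (-3 * z) * (-3)) z := hlin2.exp
  have hg0 : 0 < 2 * c * Real.exp (-3 * z / 2) + c ^ 2 * Real.exp (-3 * z) := by positivity
  have hg : HasDerivAt (fun z' : ℝ => 2 * c * Real.exp (-3 * z' / 2) + c ^ 2 * Real.exp (-3 * z'))
      (2 * c * (Real.exp (-3 * z / 2) * (-3/2)) + c ^ 2 * (Real.exp (-3 * z) * (-3))) z :=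
    (hE1.const_mul (2*c)).add (hE2.const_mul (c^2))
  have hrD := hg.sqrt hg0.ne'
  set r : ℝ := Real.sqrt (2 * c * Real.exp (-3 * z / 2) + c ^ 2 * Real.exp (-3 * z)) with hrdef
  set AD : ℝ := c * (Real.exp (-3 * z / 2) * (-3/2)) +
        (2 * c * (Real.exp (-3 * z / 2) * (-3/2)) + c ^ 2 * (Real.exp (-3 * z) * (-3))) /
          (2 * r) with hADdef
  have hA : HasDerivAt (fun z' => Afun c z') AD z := by
    unfold Afun
    exact ((hE1.const_mul c).const_add 1).add hrD
  set A : ℝ := Afun c z with hAdef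
  have hA1 : 1 < A := by
    have : 0 ≤ r := Real.sqrt_nonneg _
    have h2 : 0 < c * Real.exp (-3 * z / 2) := by positivity
    rw [hAdef]; unfold Afun; rw [← hrdef]; linarith
  have hA0 : 0 < A := by linarith
  -- s = A^(1/3)
  set s : ℝ := A ^ ((1:ℝ)/3) with hsdef
  have hs1 : 1 < s := by
    rw [hsdef]
    exact Real.one_lt_rpow_iff_of_pos hA0 |>.2 (Or.inl ⟨hA1, by norm_num⟩)
  have hs0 : 0 < s := by linarith
  have key : ∀ n : ℕ, A ^ ((n:ℝ)/3) = s ^ n := by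
    intro n
    rw [hsdef, show ((n:ℝ)/3) = (1/3) * n by ring, Real.rpow_mul hA0.le, Real.rpow_natCast]
  have keyneg : ∀ n : ℕ, A ^ (-(n:ℝ)/3) = (s ^ n)⁻¹ := by
    intro n
    rw [neg_div, Real.rpow_neg hA0.le, key]
  have e1 : A ^ (-(2:ℝ)/3) = (s^2)⁻¹ := by
    have := keyneg 2; norm_num at this ⊢; exact this
  have e2 : A ^ ((2:ℝ)/3) = s^2 := by
    have := key 2; norm_num at this ⊢; exact this
  have e3 : A ^ (-(2:ℝ)/3 - 1) = (s^5)⁻¹ := by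
    have := keyneg 5; rw [show (-(2:ℝ)/3 - 1) = -((5:ℕ):ℝ)/3 by norm_num]; exact this
  have e4 : A ^ ((2:ℝ)/3 - 1) = (s^1)⁻¹ := by
    have := keyneg 1; rw [show ((2:ℝ)/3 - 1) = -((1:ℕ):ℝ)/3 by norm_num]; exact this
  have e5 : A ^ (-(1:ℝ)/3) = (s^1)⁻¹ := by
    have := keyneg 1; norm_num at this ⊢; exact this
  have e6 : A ^ ((1:ℝ)/3) = s := hsdef.symm
  have e7 : A ^ (-(1:ℝ)/3 - 1) = (s^4)⁻¹ := by
    have := keyneg 4; rw [show (-(1:ℝ)/3 - 1) = -((4:ℕ):ℝ)/3 by norm_num]; exact this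
  have e8 : A ^ ((1:ℝ)/3 - 1) = (s^2)⁻¹ := by
    have := keyneg 2; rw [show ((1:ℝ)/3 - 1) = -((2:ℕ):ℝ)/3 by norm_num]; exact this
  -- log argument positive
  have hLpos : 0 < A ^ (-(1:ℝ)/3) + A ^ ((1:ℝ)/3) - 2 := by
    rw [e5, e6]
    have h : (s^1)⁻¹ + s - 2 = (s-1)^2/s := by field_simp; ring
    rw [h]
    exact div_pos (pow_pos (by linarith) 2) hs0
  -- assemble derivative of the whole function
  have hP2n := (hA.rpow_const (p := -(2:ℝ)/3) (Or.inl hA0.ne')).const_mul (-(1/b))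
  have hP2 := (hA.rpow_const (p := (2:ℝ)/3) (Or.inl hA0.ne')).const_mul (1/b)
  have hPL := ((hA.rpow_const (p := -(1:ℝ)/3) (Or.inl hA0.ne')).add
      (hA.rpow_const (p := (1:ℝ)/3) (Or.inl hA0.ne'))).sub_const 2
  have hlog := (hPL.log hLpos.ne').const_mul (2/b)
  have hF := ((hP2n.sub hP2).sub hlog).add_const d
  erw [hF.deriv]
  simp only [Pi.add_apply]
  -- now pure algebra
  rw [e1, e2, e3, e4, e5, e6, e7, e8]
  -- relations
  have hr2 : r^2 = 2 * c * Real.exp (-3 * z / 2) + c ^ 2 * Real.exp (-3 * z) :=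
    Real.sq_sqrt hg0.le
  have hr0 : 0 < r := Real.sqrt_pos.2 hg0
  have hs3A : s^3 = 1 + c * Real.exp (-3 * z / 2) + r := by
    have h := key 3
    rw [show (((3:ℕ)):ℝ)/3 = (1:ℝ) by norm_num, Real.rpow_one] at h
    rw [← h, hAdef]
    rfl
  have hEE : Real.exp (-3 * z) = Real.exp (-3 * z / 2) ^ 2 := by
    rw [sq, ← Real.exp_add]; congr 1; ring
  have h2r : 2 * s^3 * r = s^6 - 1 := by
    linear_combination (r - s^3 - 1 - c * Real.exp (-3 * z / 2)) * hs3A + hr2 +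
      c^2 * hEE
  have h2u : 2 * s^3 * (c * Real.exp (-3 * z / 2)) = s^6 - 2*s^3 + 1 := by
    linear_combination (-2*s^3) * hs3A - h2r
  have hs3ne : (s:ℝ)^3 ≠ 0 := by positivity
  have hE1eq : Real.exp (-3 * z / 2) = (s^6 - 2*s^3 + 1) / (2 * s^3 * c) := by
    rw [eq_div_iff (by positivity)]
    linear_combination h2u
  have hE2eq : Real.exp (-3 * z) = ((s^6 - 2*s^3 + 1) / (2 * s^3 * c))^2 := by
    rw [hEE, hE1eq]
  have hreq : r = (s^6 - 1) / (2 * s^3) := by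
    rw [eq_div_iff (by positivity)]
    linear_combination h2r
  have hs6 : s^6 - 1 ≠ 0 := by
    have : (1:ℝ) < s^6 := by
      calc (1:ℝ) = 1^6 := by norm_num
      _ < s^6 := by gcongr
    linarith
  have hLne : (s^1)⁻¹ + s - 2 ≠ 0 := by
    have h : (s^1)⁻¹ + s - 2 = (s-1)^2/s := by field_simp; ring
    rw [h]
    exact (div_pos (pow_pos (by linarith) 2) hs0).ne'
  have hsne : s ≠ 0 := hs0.ne'
  have hs3p1 : s^3 + 1 ≠ 0 := by positivity
  have hADval : AD = -(3/2) * s^3 * (s^3-1) / (s^3+1) := by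
    rw [hADdef, hE2eq, hE1eq, hreq]
    field_simp
    ring
  rw [hADval]
  have hsm1 : s - 1 ≠ 0 := sub_ne_zero.2 (by linarith)
  have hLeq : (s^1)⁻¹ + s - 2 = (s-1)^2/s := by field_simp; ring
  rw [hLeq]
  field_simp
  ring
end

section
/- For b ≠ 0 and σ > 0, the functions u(S,t) = d·S, u(S,t) = (3/b)·S·(log S - σ²t/8), and u(S,t) = -(1/b)·S·(log S - σ²t/8) (d ∈ ℝ arbitrary) are exact solutions of the PDE u_t + (σ²/2)·S²·u_SS/(1 - b·S·u_SS)² = 0 on S > 0, provided the denominator 1 - b·S·u_SS does not vanish; explicitly, for the second solution 1 - b·S·u_SS = -2 and for the third 1 - b·S·u_SS = 2 for all S > 0. -/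
lemma aux2 (c k S : ℝ) (hS : 0 < S) :
    deriv (deriv (fun s => c * s * (Real.log s - k))) S = c / S := by
  have h1 : ∀ x : ℝ, 0 < x →
      deriv (fun s => c * s * (Real.log s - k)) x = c * (Real.log x - k) + c := by
    intro x hx
    have h := (((hasDerivAt_id x).const_mul c).mul
      ((Real.hasDerivAt_log hx.ne').sub_const k))
    simp only [id_eq] at h
    rw [show (fun s => c * s * (Real.log s - k)) = ((fun y => c * y) * fun x => Real.log x - k) from rfl, h.deriv]
    field_simp
  have heq : deriv (fun s => c * s * (Real.log s - k))
      =ᶠ[nhds S] fun x => c * (Real.log x - k) + c := by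
    filter_upwards [eventually_gt_nhds hS] with x hx using h1 x hx
  rw [heq.deriv_eq]
  have h2 : HasDerivAt (fun x => c * (Real.log x - k) + c) (c * S⁻¹) S :=
    (((Real.hasDerivAt_log hS.ne').sub_const k).const_mul c).add_const c
  rw [h2.deriv]
  field_simp

lemma auxt (A L m t : ℝ) :
    deriv (fun τ : ℝ => A * (L - m * τ / 8)) t = -(A * m / 8) := by
  have h : HasDerivAt (fun τ : ℝ => A * (L - m * τ / 8))
      (A * (0 - m * 1 / 8)) t := by
    exact ((((hasDerivAt_const t L).sub
      (((hasDerivAt_id t).const_mul m).div_const 8))).const_mul A)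
  rw [h.deriv]; ring

/-- The trivially-invariant exact solutions `d·S`, `(3/b)S(log S - σ²t/8)` and
`-(1/b)S(log S - σ²t/8)` of the nonlinear Black–Scholes equation, together with
the values of the denominator `1 - bSu_SS`. -/
theorem stmt17 (b σ d : ℝ) (hb : b ≠ 0) (hσ : 0 < σ) :
    (∀ t S : ℝ, 0 < S →
      deriv (fun τ : ℝ => d * S) t
        + σ ^ 2 / 2 * S ^ 2 * deriv (deriv (fun s => d * s)) S
          / (1 - b * S * deriv (deriv (fun s => d * s)) S) ^ 2 = 0)
    ∧ (∀ t S : ℝ, 0 < S →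
      1 - b * S * deriv (deriv (fun s => 3 / b * s * (Real.log s - σ ^ 2 * t / 8))) S = -2)
    ∧ (∀ t S : ℝ, 0 < S →
      deriv (fun τ => 3 / b * S * (Real.log S - σ ^ 2 * τ / 8)) t
        + σ ^ 2 / 2 * S ^ 2
            * deriv (deriv (fun s => 3 / b * s * (Real.log s - σ ^ 2 * t / 8))) S
          / (1 - b * S
              * deriv (deriv (fun s => 3 / b * s * (Real.log s - σ ^ 2 * t / 8))) S) ^ 2 = 0)
    ∧ (∀ t S : ℝ, 0 < S →
      1 - b * S * deriv (deriv (fun s => -(1 / b) * s * (Real.log s - σ ^ 2 * t / 8))) S = 2)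
    ∧ (∀ t S : ℝ, 0 < S →
      deriv (fun τ => -(1 / b) * S * (Real.log S - σ ^ 2 * τ / 8)) t
        + σ ^ 2 / 2 * S ^ 2
            * deriv (deriv (fun s => -(1 / b) * s * (Real.log s - σ ^ 2 * t / 8))) S
          / (1 - b * S
              * deriv (deriv (fun s => -(1 / b) * s * (Real.log s - σ ^ 2 * t / 8))) S) ^ 2
        = 0) := by
  have hdS : deriv (deriv (fun s : ℝ => d * s)) = fun _ => 0 := by
    have h1 : deriv (fun s : ℝ => d * s) = fun _ => d := by
      funext x
      simpa using ((hasDerivAt_id x).const_mul d).deriv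
    rw [h1]
    funext x
    exact deriv_const x d
  refine ⟨?_, ?_, ?_, ?_, ?_⟩
  · intro t S hS
    simp [hdS]
  · intro t S hS
    rw [aux2 (3 / b) (σ ^ 2 * t / 8) S hS]
    field_simp
    ring
  · intro t S hS
    rw [aux2 (3 / b) (σ ^ 2 * t / 8) S hS,
      show (fun τ => 3 / b * S * (Real.log S - σ ^ 2 * τ / 8))
        = fun τ : ℝ => (3 / b * S) * (Real.log S - σ ^ 2 * τ / 8) from rfl,
      auxt (3 / b * S) (Real.log S) (σ ^ 2) t,
      show (1 : ℝ) - b * S * (3 / b / S) = -2 from by field_simp; ring]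
    field_simp
    ring
  · intro t S hS
    rw [aux2 (-(1 / b)) (σ ^ 2 * t / 8) S hS]
    field_simp
    norm_num
  · intro t S hS
    rw [aux2 (-(1 / b)) (σ ^ 2 * t / 8) S hS,
      show (fun τ => -(1 / b) * S * (Real.log S - σ ^ 2 * τ / 8))
        = fun τ : ℝ => (-(1 / b) * S) * (Real.log S - σ ^ 2 * τ / 8) from rfl,
      auxt (-(1 / b) * S) (Real.log S) (σ ^ 2) t,
      show (1 : ℝ) - b * S * (-(1 / b) / S) = 2 from by field_simp; ring]
    field_simp
    ring
end

section
/- Let b ≠ 0, σ > 0, c > 0, and let u_r(S,t) = S·v_r(log S - σ²t/8) where v_r is given by v_r(z) = -(1/b)[A(z)^{-2/3} + A(z)^{2/3} + 2·log(A(z)^{-1/3} + A(z)^{1/3} - 2)] + d, A(z) = 1 + c·e^{-3z/2} + √(2c·e^{-3z/2} + c²e^{-3z}). Then as S → ∞ (t fixed), u_r(S,t) = (3/b)·S·log S + O(S), i.e. u_r(S,t)/(S·log S) → 3/b. -/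
/-- The invariant solution profile `v_r`. -/
noncomputable def vr (b c d z : ℝ) : ℝ :=
  -(1 / b) * ((Afun c z) ^ (-(2 : ℝ) / 3) + (Afun c z) ^ ((2 : ℝ) / 3)
      + 2 * Real.log ((Afun c z) ^ (-(1 : ℝ) / 3) + (Afun c z) ^ ((1 : ℝ) / 3) - 2))
    + d

open Filter Real

noncomputable def Gfun (c z : ℝ) : ℝ :=
  ((Afun c z) ^ ((1:ℝ)/3) * (((Afun c z) ^ ((1:ℝ)/3))^2 + (Afun c z) ^ ((1:ℝ)/3) + 1)^2)⁻¹

noncomputable def Wfun (c z : ℝ) : ℝ :=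
  (c * Real.sqrt (Real.exp (-3 * z / 2)) + Real.sqrt (2*c + c^2 * Real.exp (-3 * z / 2)))^2

lemma A_gt_one {c : ℝ} (hc : 0 < c) (z : ℝ) : 1 < Afun c z := by
  have h1 : 0 < c * Real.exp (-3 * z / 2) := by positivity
  have h2 : 0 ≤ Real.sqrt (2 * c * Real.exp (-3 * z / 2) + c ^ 2 * Real.exp (-3 * z)) :=
    Real.sqrt_nonneg _
  unfold Afun; linarith

lemma key_identity {b c : ℝ} (hb : b ≠ 0) (hc : 0 < c) (d z : ℝ) :
    vr b c d z - 3 * z / b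
      = -(1/b) * ((Afun c z) ^ (-(2:ℝ)/3) + (Afun c z) ^ ((2:ℝ)/3)
          + 2 * Real.log (Gfun c z * Wfun c z)) + d := by
  have ha : 1 < Afun c z := A_gt_one hc z
  set a := Afun c z with hadef
  have ha0 : 0 < a := lt_trans one_pos ha
  set y := a ^ ((1:ℝ)/3) with hy
  have hy0 : 0 < y := Real.rpow_pos_of_pos ha0 _
  have hy3 : y ^ 3 = a := by
    rw [hy, ← Real.rpow_natCast (a ^ ((1:ℝ)/3)) 3, ← Real.rpow_mul ha0.le]
    norm_num
  have hy1 : 1 < y := by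
    nlinarith [sq_nonneg (y - 1), sq_nonneg (y + 1), sq_nonneg y]
  have h13 : a ^ (-(1:ℝ)/3) = y⁻¹ := by
    rw [show -(1:ℝ)/3 = -(1/3 : ℝ) by norm_num, Real.rpow_neg ha0.le, hy]
  have h23 : a ^ ((2:ℝ)/3) = y ^ 2 := by
    rw [hy, ← Real.rpow_natCast (a ^ ((1:ℝ)/3)) 2, ← Real.rpow_mul ha0.le]
    norm_num
  have hm23 : a ^ (-(2:ℝ)/3) = (y ^ 2)⁻¹ := by
    rw [show -(2:ℝ)/3 = -(2/3 : ℝ) by norm_num, Real.rpow_neg ha0.le, ← h23]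
  -- e facts
  set e := Real.exp (-3 * z / 2) with he
  have he0 : 0 < e := Real.exp_pos _
  have hee : Real.exp (-3 * z) = e ^ 2 := by
    rw [he, sq, ← Real.exp_add]; ring_nf
  have hse : Real.sqrt e ^ 2 = e := Real.sq_sqrt he0.le
  have hsplit : Real.sqrt (2 * c * e + c ^ 2 * Real.exp (-3*z))
      = Real.sqrt e * Real.sqrt (2*c + c^2 * e) := by
    rw [hee, show 2*c*e + c^2*e^2 = e * (2*c + c^2*e) by ring, Real.sqrt_mul he0.le]
  have ham1 : a - 1 = Real.sqrt e * (c * Real.sqrt e + Real.sqrt (2*c + c^2*e)) := by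
    have : a = 1 + c * e + Real.sqrt (2 * c * e + c ^ 2 * Real.exp (-3*z)) := rfl
    rw [this, hsplit]; nlinarith [hse]
  have hW : (a - 1)^2 = e * Wfun c z := by
    rw [ham1, Wfun]; rw [← he]; nlinarith [hse]
  have hG : Gfun c z = (y * (y^2 + y + 1)^2)⁻¹ := rfl
  have hy2ne : (y^2 + y + 1) ≠ 0 := by positivity
  have hinner : a ^ (-(1:ℝ)/3) + a ^ ((1:ℝ)/3) - 2
      = Gfun c z * Wfun c z * e := by
    have hWe : Wfun c z * e = (a-1)^2 := by rw [hW]; ring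
    rw [h13, ← hy, hG, mul_assoc, hWe, ← hy3]
    field_simp
    ring
  have hGW0 : 0 < Gfun c z * Wfun c z := by
    have h1 : 0 < Gfun c z := by rw [hG]; positivity
    have h2 : 0 < Wfun c z := by
      rw [Wfun]
      have : 0 < Real.sqrt (2*c + c^2 * e) := Real.sqrt_pos.mpr (by positivity)
      have h3 : 0 ≤ c * Real.sqrt e := by positivity
      rw [← he]; positivity
    positivity
  have hlog : Real.log (a ^ (-(1:ℝ)/3) + a ^ ((1:ℝ)/3) - 2)
      = Real.log (Gfun c z * Wfun c z) + (-3 * z / 2) := by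
    rw [hinner, Real.log_mul (ne_of_gt hGW0) (ne_of_gt he0), he, Real.log_exp]
  rw [vr, ← hadef, hlog]
  field_simp
  ring

lemma tendsto_e : Tendsto (fun z : ℝ => Real.exp (-3 * z / 2)) atTop (nhds 0) := by
  apply Real.tendsto_exp_atBot.comp
  have h1 : Tendsto (fun z : ℝ => (3 : ℝ) * z / 2) atTop atTop :=
    (Filter.tendsto_id.const_mul_atTop (by norm_num : (0:ℝ) < 3)).atTop_div_const (by norm_num)
  exact (tendsto_neg_atTop_atBot.comp h1).congr (fun z => by simp; ring)

lemma tendsto_e2 : Tendsto (fun z : ℝ => Real.exp (-3 * z)) atTop (nhds 0) := by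
  apply Real.tendsto_exp_atBot.comp
  have h1 : Tendsto (fun z : ℝ => (3 : ℝ) * z) atTop atTop :=
    Filter.tendsto_id.const_mul_atTop (by norm_num : (0:ℝ) < 3)
  exact (tendsto_neg_atTop_atBot.comp h1).congr (fun z => by simp)

lemma tendsto_A {c : ℝ} (hc : 0 < c) : Tendsto (fun z => Afun c z) atTop (nhds 1) := by
  have hs : Tendsto (fun z : ℝ => Real.sqrt (2 * c * Real.exp (-3 * z / 2)
      + c ^ 2 * Real.exp (-3 * z))) atTop (nhds 0) := by
    have harg : Tendsto (fun z : ℝ => 2 * c * Real.exp (-3 * z / 2)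
        + c ^ 2 * Real.exp (-3 * z)) atTop (nhds 0) := by
      have := (tendsto_e.const_mul (2*c)).add (tendsto_e2.const_mul (c^2))
      simpa using this
    have := (Real.continuous_sqrt.tendsto 0).comp harg
    simpa [Function.comp_def] using this
  have := ((tendsto_const_nhds (x := (1:ℝ))).add (tendsto_e.const_mul c)).add hs
  unfold Afun
  simpa using this

lemma tendsto_rpow_A {c : ℝ} (hc : 0 < c) (p : ℝ) :
    Tendsto (fun z => (Afun c z) ^ p) atTop (nhds 1) := by
  have := (tendsto_A hc).rpow_const (p := p) (Or.inl one_ne_zero)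
  simpa using this

lemma tendsto_G {c : ℝ} (hc : 0 < c) : Tendsto (Gfun c) atTop (nhds 9⁻¹) := by
  have hy := tendsto_rpow_A hc ((1:ℝ)/3)
  have h1 : Tendsto (fun z => (Afun c z) ^ ((1:ℝ)/3)
      * (((Afun c z) ^ ((1:ℝ)/3))^2 + (Afun c z) ^ ((1:ℝ)/3) + 1)^2) atTop
      (nhds ((1:ℝ) * ((1^2 + 1 + 1)^2))) :=
    hy.mul ((((hy.pow 2).add hy).add tendsto_const_nhds).pow 2)
  have h2 := h1.inv₀ (by norm_num)
  unfold Gfun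
  convert h2 using 2
  norm_num

lemma tendsto_W {c : ℝ} (hc : 0 < c) : Tendsto (Wfun c) atTop (nhds (2 * c)) := by
  have hse : Tendsto (fun z : ℝ => Real.sqrt (Real.exp (-3 * z / 2))) atTop (nhds 0) := by
    have := (Real.continuous_sqrt.tendsto 0).comp tendsto_e
    simpa [Function.comp_def] using this
  have hs2 : Tendsto (fun z : ℝ => Real.sqrt (2*c + c^2 * Real.exp (-3 * z / 2))) atTop
      (nhds (Real.sqrt (2*c))) := by
    have harg : Tendsto (fun z : ℝ => 2*c + c^2 * Real.exp (-3 * z / 2)) atTop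
        (nhds (2*c)) := by
      have := (tendsto_const_nhds (x := 2*c)).add (tendsto_e.const_mul (c^2))
      simpa using this
    exact ((Real.continuous_sqrt.tendsto (2*c)).comp harg)
  have h1 : Tendsto (Wfun c) atTop (nhds ((c * 0 + Real.sqrt (2*c))^2)) :=
    (((hse.const_mul c).add hs2).pow 2)
  have h2 : (c * 0 + Real.sqrt (2*c))^2 = 2*c := by
    rw [mul_zero, zero_add, Real.sq_sqrt (by positivity)]
  rwa [h2] at h1

lemma tendsto_remainder {b c : ℝ} (hb : b ≠ 0) (hc : 0 < c) (d : ℝ) :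
    ∃ C : ℝ, Tendsto (fun z => vr b c d z - 3 * z / b) atTop (nhds C) := by
  refine ⟨-(1/b) * (1 + 1 + 2 * Real.log (9⁻¹ * (2*c))) + d, ?_⟩
  have hlog : Tendsto (fun z => Real.log (Gfun c z * Wfun c z)) atTop
      (nhds (Real.log (9⁻¹ * (2*c)))) :=
    ((tendsto_G hc).mul (tendsto_W hc)).log (by positivity)
  have h1 : Tendsto (fun z => -(1/b) * ((Afun c z) ^ (-(2:ℝ)/3) + (Afun c z) ^ ((2:ℝ)/3)
      + 2 * Real.log (Gfun c z * Wfun c z)) + d) atTop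
      (nhds (-(1/b) * (1 + 1 + 2 * Real.log (9⁻¹ * (2*c))) + d)) :=
    ((((tendsto_rpow_A hc _).add (tendsto_rpow_A hc _)).add (hlog.const_mul 2)).const_mul
      (-(1/b))).add_const d
  exact h1.congr (fun z => (key_identity hb hc d z).symm)

/-- Superlinear asymptotic growth of the invariant solution
`u_r(S,t) = S v_r(log S - σ²t/8)`: as `S → ∞`, `u_r(S,t)/(S log S) → 3/b`. -/
theorem stmt18 (b σ c d : ℝ) (hb : b ≠ 0) (hσ : 0 < σ) (hc : 0 < c) :
    ∀ t : ℝ,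
      Filter.Tendsto
        (fun S : ℝ => S * vr b c d (Real.log S - σ ^ 2 * t / 8) / (S * Real.log S))
        Filter.atTop (nhds (3 / b)) := by
  intro t
  set k := σ ^ 2 * t / 8 with hk
  obtain ⟨C, hC⟩ := tendsto_remainder hb hc d
  have hlogS : Tendsto Real.log atTop atTop := Real.tendsto_log_atTop
  have hz : Tendsto (fun S : ℝ => Real.log S - k) atTop atTop :=
    tendsto_atTop_add_const_right _ (-k) hlogS
  have hR : Tendsto (fun S : ℝ => vr b c d (Real.log S - k) - 3 * (Real.log S - k) / b)
      atTop (nhds C) := hC.comp hz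
  have hinv : Tendsto (fun S : ℝ => (Real.log S)⁻¹) atTop (nhds 0) :=
    hlogS.inv_tendsto_atTop
  have hF : Tendsto (fun S : ℝ => 3 / b
      + ((vr b c d (Real.log S - k) - 3 * (Real.log S - k) / b) - 3 * k / b)
        * (Real.log S)⁻¹) atTop (nhds (3 / b)) := by
    have := tendsto_const_nhds (x := 3/b) (f := (atTop : Filter ℝ)) |>.add
      (((hR.sub_const (3 * k / b)).mul hinv))
    simpa using this
  refine hF.congr' ?_
  filter_upwards [Filter.eventually_ge_atTop (2 : ℝ)] with S hS
  have hS0 : (S : ℝ) ≠ 0 := by linarith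
  have hlS : Real.log S ≠ 0 := by
    have : (0:ℝ) < Real.log S := Real.log_pos (by linarith)
    exact ne_of_gt this
  rw [mul_div_mul_left _ _ hS0] at *
  field_simp
  ring
end
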